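/- Let K ⊆ ℝ² be a set with T(K) ⊆ K, and let K̄ denote the topological closure of K. If U, V, Q, R ∈ K̄ with U ≠ V and Q ≠ R, and the lines UV and QR are distinct and not parallel, then the intersection point of the lines UV and QR belongs to K̄. -/

import Mathlib

open Set Filter
open Topology

noncomputable section

/-- The line through two points in the plane `ℝ × ℝ`. -/
def line (a b : ℝ × ℝ) : AffineSubspace ℝ (ℝ × ℝ) := affineSpan ℝ {a, b}

/-- The intersection operation `T`: the set of all intersection points of pairs of
distinct lines through pairs of distinct points of `S`. -/
def interT (S : Set (ℝ × ℝ)) : Set (ℝ × ℝ) :=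
  {x | ∃ a ∈ S, ∃ b ∈ S, ∃ c ∈ S, ∃ d ∈ S,
    a ≠ b ∧ c ≠ d ∧ line a b ≠ line c d ∧ x ∈ line a b ∧ x ∈ line c d}



def cross' (x y : ℝ × ℝ) : ℝ := x.1 * y.2 - x.2 * y.1

lemma exists_smul_of_cross'_eq_zero {x y : ℝ × ℝ} (hx : x ≠ 0) (h : cross' x y = 0) :
    ∃ c : ℝ, y = c • x := by
  have hx' : x.1 ≠ 0 ∨ x.2 ≠ 0 := by
    by_contra hc
    push_neg at hc
    exact hx (Prod.ext hc.1 hc.2)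
  rcases hx' with h1 | h2
  · refine ⟨y.1 / x.1, Prod.ext ?_ ?_⟩
    · simp; field_simp
    · simp [cross'] at h ⊢
      field_simp
      nlinarith [h]
  · refine ⟨y.2 / x.2, Prod.ext ?_ ?_⟩
    · simp [cross'] at h ⊢
      field_simp
      nlinarith [h]
    · simp; field_simp

lemma mem_line_iff {a b x : ℝ × ℝ} : x ∈ line a b ↔ ∃ s : ℝ, x = s • (b - a) + a := by
  have : x = (x - a) +ᵥ a := by simp
  rw [this, line, vadd_left_mem_affineSpan_pair]
  constructor
  · rintro ⟨r, hr⟩; exact ⟨r, by simp [vsub_eq_sub] at hr ⊢; rw [hr]; abel⟩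
  · rintro ⟨s, hs⟩; exact ⟨s, by simp [vsub_eq_sub] at hs ⊢; rw [hs]; abel⟩

lemma dir_line (a b : ℝ × ℝ) : (line a b).direction = Submodule.span ℝ {b - a} := by
  rw [line, direction_affineSpan, vectorSpan_pair_rev, vsub_eq_sub]

lemma line_ne_of_cross' {a b c d : ℝ × ℝ} (h : cross' (b - a) (d - c) ≠ 0) :
    line a b ≠ line c d := by
  intro he
  have hd : (line a b).direction = (line c d).direction := by rw [he]
  rw [dir_line, dir_line] at hd
  have : d - c ∈ Submodule.span ℝ {b - a} := by
    rw [hd]; exact Submodule.mem_span_singleton_self _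
  rcases Submodule.mem_span_singleton.1 this with ⟨r, hr⟩
  apply h
  rw [← hr]
  simp [cross']
  ring

lemma dir_eq_of_cross' {U V Q R : ℝ × ℝ} (hUV : U ≠ V) (hQR : Q ≠ R)
    (h : cross' (V - U) (R - Q) = 0) :
    (line U V).direction = (line Q R).direction := by
  have hx : V - U ≠ 0 := sub_ne_zero.2 (Ne.symm hUV)
  obtain ⟨c, hc⟩ := exists_smul_of_cross'_eq_zero hx h
  have hc0 : c ≠ 0 := by
    rintro rfl
    simp at hc
    exact hQR (sub_eq_zero.1 hc).symm
  rw [dir_line, dir_line, hc, Submodule.span_singleton_smul_eq (isUnit_iff_ne_zero.2 hc0)]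

/-- intersection point formula -/
def interPt (u v q r : ℝ × ℝ) : ℝ × ℝ :=
  (cross' (q - u) (r - q) / cross' (v - u) (r - q)) • (v - u) + u

lemma interPt_mem_left (u v q r : ℝ × ℝ) : interPt u v q r ∈ line u v :=
  mem_line_iff.2 ⟨_, rfl⟩

lemma interPt_mem_right {u v q r : ℝ × ℝ} (hD : cross' (v - u) (r - q) ≠ 0) :
    interPt u v q r ∈ line q r := by
  have hrq : r - q ≠ 0 := by
    rintro h
    apply hD
    rw [h]
    simp [cross']
  set d := cross' (v - u) (r - q) with hd
  set N := cross' (q - u) (r - q) with hN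
  have hc : cross' (r - q) (interPt u v q r - q) = 0 := by
    have expand : ∀ s : ℝ, cross' (r - q) (s • (v - u) + u - q) = s * (-d) + N := by
      intro s; simp [cross', hd, hN]; ring
    have heq : interPt u v q r - q = (N / d) • (v - u) + u - q := by
      simp only [interPt, ← hN, ← hd]
    rw [heq, expand]
    field_simp
    ring
  obtain ⟨c, hc'⟩ := exists_smul_of_cross'_eq_zero hrq hc
  exact mem_line_iff.2 ⟨c, by rw [← hc']; abel⟩

lemma inter_unique {a b c d x y : ℝ × ℝ} (hD : cross' (b - a) (d - c) ≠ 0)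
    (hx1 : x ∈ line a b) (hx2 : x ∈ line c d)
    (hy1 : y ∈ line a b) (hy2 : y ∈ line c d) : x = y := by
  obtain ⟨s, hs⟩ := mem_line_iff.1 hx1
  obtain ⟨s', hs'⟩ := mem_line_iff.1 hy1
  obtain ⟨t, ht⟩ := mem_line_iff.1 hx2
  obtain ⟨t', ht'⟩ := mem_line_iff.1 hy2
  have key : (s - s') • (b - a) = (t - t') • (d - c) := by
    have : x - y = x - y := rfl
    calc (s - s') • (b - a) = (s • (b - a) + a) - (s' • (b - a) + a) := by
          rw [sub_smul]; abel
      _ = x - y := by rw [← hs, ← hs']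
      _ = (t • (d - c) + c) - (t' • (d - c) + c) := by rw [← ht, ← ht']
      _ = (t - t') • (d - c) := by rw [sub_smul]; abel
  have h2 : (s - s') * cross' (b - a) (d - c) = 0 := by
    have e1 : cross' ((s - s') • (b - a)) (d - c) = (s - s') * cross' (b - a) (d - c) := by
      simp [cross']; ring
    have e2 : cross' ((t - t') • (d - c)) (d - c) = 0 := by simp [cross']; ring
    rw [← e1, key, e2]
  have hss : s = s' := by
    rcases mul_eq_zero.1 h2 with h | h
    · linarith [sub_eq_zero.1 h]
    · exact absurd h hD
  rw [hs, hs', hss]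

lemma tendsto_cross' {f g : ℕ → ℝ × ℝ} {x y : ℝ × ℝ}
    (hf : Tendsto f atTop (𝓝 x)) (hg : Tendsto g atTop (𝓝 y)) :
    Tendsto (fun n => cross' (f n) (g n)) atTop (𝓝 (cross' x y)) := by
  have hf1 : Tendsto (fun n => (f n).1) atTop (𝓝 x.1) := (continuous_fst.tendsto _).comp hf
  have hf2 : Tendsto (fun n => (f n).2) atTop (𝓝 x.2) := (continuous_snd.tendsto _).comp hf
  have hg1 : Tendsto (fun n => (g n).1) atTop (𝓝 y.1) := (continuous_fst.tendsto _).comp hg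
  have hg2 : Tendsto (fun n => (g n).2) atTop (𝓝 y.2) := (continuous_snd.tendsto _).comp hg
  exact (hf1.mul hg2).sub (hf2.mul hg1)

/-- If `T(K) ⊆ K` and `U, V, Q, R` lie in the closure of `K`, with the lines `UV` and `QR`
distinct and not parallel, then the intersection point of the lines `UV` and `QR` also lies
in the closure of `K`. -/
theorem closure_closed_under_intersections (K : Set (ℝ × ℝ)) (hK : interT K ⊆ K)
    (U V Q R : ℝ × ℝ) (hU : U ∈ closure K) (hV : V ∈ closure K)
    (hQ : Q ∈ closure K) (hR : R ∈ closure K) (hUV : U ≠ V) (hQR : Q ≠ R)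
    (hne : line U V ≠ line Q R)
    (hnpar : (line U V).direction ≠ (line Q R).direction)
    (X : ℝ × ℝ) (hX₁ : X ∈ line U V) (hX₂ : X ∈ line Q R) :
    X ∈ closure K := by
  have hD : cross' (V - U) (R - Q) ≠ 0 := fun h => hnpar (dir_eq_of_cross' hUV hQR h)
  obtain ⟨u, hu, huT⟩ := mem_closure_iff_seq_limit.1 hU
  obtain ⟨v, hv, hvT⟩ := mem_closure_iff_seq_limit.1 hV
  obtain ⟨q, hq, hqT⟩ := mem_closure_iff_seq_limit.1 hQ
  obtain ⟨r, hr, hrT⟩ := mem_closure_iff_seq_limit.1 hR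
  have hDt : Tendsto (fun n => cross' (v n - u n) (r n - q n)) atTop
      (𝓝 (cross' (V - U) (R - Q))) := tendsto_cross' (hvT.sub huT) (hrT.sub hqT)
  have hNt : Tendsto (fun n => cross' (q n - u n) (r n - q n)) atTop
      (𝓝 (cross' (Q - U) (R - Q))) := tendsto_cross' (hqT.sub huT) (hrT.sub hqT)
  have hPt : Tendsto (fun n => interPt (u n) (v n) (q n) (r n)) atTop
      (𝓝 (interPt U V Q R)) := by
    unfold interPt
    exact ((hNt.div hDt hD).smul (hvT.sub huT)).add huT
  have hXP : X = interPt U V Q R :=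
    inter_unique hD hX₁ hX₂ (interPt_mem_left U V Q R) (interPt_mem_right hD)
  rw [hXP]
  apply mem_closure_of_tendsto hPt
  filter_upwards [hDt.eventually_ne hD] with n hDn
  apply hK
  have huv : u n ≠ v n := by
    rintro h
    apply hDn
    rw [h]
    simp [cross']
  have hqr : q n ≠ r n := by
    rintro h
    apply hDn
    rw [h]
    simp [cross']
  exact ⟨u n, hu n, v n, hv n, q n, hq n, r n, hr n, huv, hqr,
    line_ne_of_cross' hDn, interPt_mem_left _ _ _ _, interPt_mem_right hDn⟩
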